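/- Call a pair of topologies (τ₀, τ₁) with τ₀ ⊆ τ₁ on a set X saturated if every nonempty τ₀-open set has nonempty τ₁-interior and every nonempty τ₁-open set has nonempty τ₀-interior. If (τ₀, τ₁) is saturated, then for every subset A of X: cl₀(int₁(A)) = cl₀(int₀(A)), where clᵢ, intᵢ denote closure and interior in τᵢ. -/

import Mathlib

theorem saturated_closure_interior {X : Type*} (t₀ t₁ : TopologicalSpace X)
    (hle : ∀ U : Set X, @IsOpen X t₀ U → @IsOpen X t₁ U)
    (h01 : ∀ U : Set X, @IsOpen X t₀ U → U.Nonempty → (@interior X t₁ U).Nonempty)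
    (h10 : ∀ U : Set X, @IsOpen X t₁ U → U.Nonempty → (@interior X t₀ U).Nonempty)
    (A : Set X) :
    @closure X t₀ (@interior X t₁ A) = @closure X t₀ (@interior X t₀ A) := by
  letI := t₀
  have hI1open : @IsOpen X t₁ (@interior X t₁ A) := @isOpen_interior X t₁ A
  have hI1sub : @interior X t₁ A ⊆ A := @interior_subset X t₁ A
  apply subset_antisymm
  · apply closure_minimal _ isClosed_closure
    intro x hx
    rw [mem_closure_iff]
    intro o ho hxo
    by_contra hne
    have hUopen : @IsOpen X t₁ (o ∩ @interior X t₁ A) := @IsOpen.inter X t₁ _ _ (hle o ho) hI1open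
    have hUne : (o ∩ @interior X t₁ A).Nonempty := ⟨x, hxo, hx⟩
    obtain ⟨y, hy⟩ := h10 _ hUopen hUne
    have hyo : y ∈ o := (interior_subset hy).1
    have hyA : y ∈ interior A :=
      interior_mono (fun w hw => hI1sub hw.2) hy
    exact hne ⟨y, hyo, hyA⟩
  · apply closure_mono
    exact @interior_maximal X t₁ A _ interior_subset (hle _ isOpen_interior)
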